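/- Let R be a Noetherian commutative ring of prime characteristic p, let M be a finitely generated R-module, and let κ be a p^{-e}-linear map on M for some e ≥ 1. For every R-submodule N ⊆ M, the image κ(N) = {κ(x) : x ∈ N} is again an R-submodule of M, and the iterated images form a descending chain M ⊇ κ(M) ⊇ κ^2(M) ⊇ ⋯. This chain stabilizes: there exists n₀ such that κ^n(M) = κ^{n₀}(M) for all n ≥ n₀. Moreover, the stable image σ := κ^{n₀}(M) satisfies κ(σ) = σ, and every R-submodule N ⊆ M with κ(N) = N is contained in σ (σ is the largest submodule on which κ is surjective). -/

import Mathlib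

/-! Auxiliary machinery for bounding strictly descending chains of submodules. -/

/-- All weakly descending chains with `L` strict consecutive steps satisfy `L ≤ B`. -/
def HSLChainBdd (α : Type*) [Preorder α] (B : ℕ) : Prop :=
  ∀ C : ℕ → α, (∀ t, C (t + 1) ≤ C t) → ∀ L : ℕ, (∀ t < L, C (t + 1) ≠ C t) → L ≤ B

theorem HSLChainBdd.of_le {α : Type*} [Preorder α] {B B' : ℕ}
    (h : HSLChainBdd α B) (hBB' : B ≤ B') : HSLChainBdd α B' :=
  fun C hC L hL => (h C hC L hL).trans hBB'

open Classical in
theorem HSLChainBdd.count {β : Type*} [PartialOrder β] {B : ℕ} (hB : HSLChainBdd β B)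
    (D : ℕ → β) (hD : ∀ t, D (t + 1) ≤ D t) (L : ℕ) :
    ((Finset.range L).filter fun t => D (t + 1) ≠ D t).card ≤ B := by
  classical
  have hant : Antitone D := antitone_nat_of_succ_le hD
  set S : Finset ℕ := (Finset.range L).filter fun t => D (t + 1) ≠ D t with hS
  have hmemS : ∀ {t}, t ∈ S → t < L ∧ D (t + 1) ≠ D t := by
    intro t ht
    rw [hS, Finset.mem_filter, Finset.mem_range] at ht
    exact ht
  set k := S.card with hk
  let nth : Fin k → ℕ := fun j => S.orderEmbOfFin hk.symm j
  have hnth_mem : ∀ j, nth j ∈ S := fun j => Finset.orderEmbOfFin_mem S hk.symm j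
  have hnth_mono : ∀ {j j' : Fin k}, j ≤ j' → nth j ≤ nth j' :=
    fun h => (S.orderEmbOfFin hk.symm).monotone h
  let e : ℕ → ℕ := fun j => if h : j < k then nth ⟨j, h⟩ else L
  have he_mono : Monotone e := by
    intro j j' hjj'
    by_cases h1 : j < k
    · by_cases h2 : j' < k
      · simp only [e, dif_pos h1, dif_pos h2]
        exact hnth_mono (by exact_mod_cast hjj')
      · simp only [e, dif_pos h1, dif_neg h2]
        exact le_of_lt (hmemS (hnth_mem ⟨j, h1⟩)).1
    · have h2 : ¬ j' < k := fun h => h1 (lt_of_le_of_lt hjj' h)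
      simp only [e, dif_neg h1, dif_neg h2, le_refl]
  have hC : ∀ t, (D ∘ e) (t + 1) ≤ (D ∘ e) t := fun t => hant (he_mono (Nat.le_succ t))
  have hstrict : ∀ j < k, (D ∘ e) (j + 1) ≠ (D ∘ e) j := by
    intro j hj heq
    have hej : e j = nth ⟨j, hj⟩ := dif_pos hj
    set t := nth ⟨j, hj⟩ with ht
    obtain ⟨htL, htne⟩ := hmemS (hnth_mem ⟨j, hj⟩)
    have hsucc : t + 1 ≤ e (j + 1) := by
      by_cases h2 : j + 1 < k
      · have : nth ⟨j, hj⟩ < nth ⟨j + 1, h2⟩ :=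
          (S.orderEmbOfFin hk.symm).strictMono (by exact_mod_cast Nat.lt_succ_self j)
        simpa [e, dif_pos h2] using this
      · simpa [e, dif_neg h2] using htL
    have h1 : D (e (j + 1)) ≤ D (t + 1) := hant hsucc
    have h2 : D (t + 1) ≤ D t := hD t
    have h3 : D (e (j + 1)) = D t := by rw [Function.comp] at heq; rw [heq]; simp [hej]
    exact htne (le_antisymm h2 (h3 ▸ h1))
  exact hB (D ∘ e) hC k hstrict

open Classical in
theorem HSLChainBdd.pair {α β γ : Type*} [PartialOrder α] [PartialOrder β] [PartialOrder γ]
    {f : α → β} {g : α → γ} (hf : Monotone f) (hg : Monotone g)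
    (hfg : ∀ a b : α, a ≤ b → f a = f b → g a = g b → a = b)
    {B₁ B₂ : ℕ} (h₁ : HSLChainBdd β B₁) (h₂ : HSLChainBdd γ B₂) :
    HSLChainBdd α (B₁ + B₂) := by
  classical
  intro C hC L hL
  have hcount₁ := h₁.count (f ∘ C) (fun t => hf (hC t)) L
  have hcount₂ := h₂.count (g ∘ C) (fun t => hg (hC t)) L
  have hsub : Finset.range L ⊆
      ((Finset.range L).filter fun t => (f ∘ C) (t + 1) ≠ (f ∘ C) t) ∪
      ((Finset.range L).filter fun t => (g ∘ C) (t + 1) ≠ (g ∘ C) t) := by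
    intro t ht
    rw [Finset.mem_union, Finset.mem_filter, Finset.mem_filter]
    by_contra h
    push_neg at h
    have h1 := h.1 ht
    have h2 := h.2 ht
    simp only [Function.comp] at h1 h2
    exact hL t (Finset.mem_range.mp ht) (hfg _ _ (hC t) h1 h2)
  calc L = (Finset.range L).card := (Finset.card_range L).symm
    _ ≤ _ := Finset.card_le_card hsub
    _ ≤ _ + _ := Finset.card_union_le _ _
    _ ≤ B₁ + B₂ := Nat.add_le_add hcount₁ hcount₂

theorem HSLChainBdd.of_finrank {K V : Type*} [DivisionRing K] [AddCommGroup V] [Module K V]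
    [FiniteDimensional K V] : HSLChainBdd (Submodule K V) (Module.finrank K V) := by
  intro C hC L hL
  have key : ∀ t, t ≤ L → t + Module.finrank K (C t) ≤ Module.finrank K (C 0) := by
    intro t
    induction t with
    | zero => intro _; simp
    | succ t ih =>
      intro ht
      have hlt : C (t + 1) < C t := lt_of_le_of_ne (hC t) (hL t (by omega))
      have h1 : Module.finrank K (C (t + 1)) < Module.finrank K (C t) :=
        Submodule.finrank_lt_finrank_of_lt hlt
      have h2 := ih (by omega)
      omega
  have h3 := key L le_rfl
  have h4 : Module.finrank K (C 0) ≤ Module.finrank K V := Submodule.finrank_le (C 0)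
  omega

/-- Chains of `A`-submodules of a module annihilated by a maximal ideal `𝔪` are bounded
by the number of generators. -/
theorem HSLChainBdd.of_torsion {A : Type*} [CommRing A] (𝔪 : Ideal A) (hmax : 𝔪.IsMaximal)
    {Q : Type*} [AddCommGroup Q] [Module A Q] [Module (A ⧸ 𝔪) Q] [IsScalarTower A (A ⧸ 𝔪) Q]
    (G : Finset Q) (hG : Submodule.span A (G : Set Q) = ⊤) :
    HSLChainBdd (Submodule A Q) G.card := by
  classical
  haveI := hmax
  letI : Field (A ⧸ 𝔪) := Ideal.Quotient.field 𝔪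
  have hsubspan : ∀ (s : Set Q), (Submodule.span A s : Set Q) ⊆ Submodule.span (A ⧸ 𝔪) s := by
    intro s x hx
    refine Submodule.span_induction ?_ ?_ ?_ ?_ hx
    · exact fun y hy => Submodule.subset_span hy
    · exact Submodule.zero_mem _
    · exact fun y z _ _ hy hz => Submodule.add_mem _ hy hz
    · intro a y _ hy
      have : a • y = (Ideal.Quotient.mk 𝔪 a) • y := by
        rw [← Ideal.Quotient.algebraMap_eq, algebraMap_smul]
      rw [this]
      exact Submodule.smul_mem _ _ hy
  have hGk : Submodule.span (A ⧸ 𝔪) (G : Set Q) = ⊤ := by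
    rw [eq_top_iff]
    intro x _
    exact hsubspan _ (hG ▸ Submodule.mem_top)
  haveI : Module.Finite (A ⧸ 𝔪) Q := ⟨⟨G, hGk⟩⟩
  let F : Submodule A Q → Submodule (A ⧸ 𝔪) Q := fun C =>
    { carrier := (C : Set Q)
      add_mem' := fun ha hb => C.add_mem ha hb
      zero_mem' := C.zero_mem
      smul_mem' := by
        intro c x hx
        obtain ⟨a, rfl⟩ := Ideal.Quotient.mk_surjective c
        have : (Ideal.Quotient.mk 𝔪 a) • x = a • x := by
          rw [← Ideal.Quotient.algebraMap_eq, algebraMap_smul]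
        simpa [this] using C.smul_mem a hx }
  have hFmono : Monotone F := fun C C' h => h
  have hFinj : ∀ C C', F C = F C' → C = C' := by
    intro C C' h
    ext x
    constructor
    · intro hx
      exact (show x ∈ F C' from h ▸ (hx : x ∈ F C))
    · intro hx
      exact (show x ∈ F C from h.symm ▸ (hx : x ∈ F C'))
  intro C hC L hL
  have hrank : Module.finrank (A ⧸ 𝔪) Q ≤ G.card := by
    have h1 : Module.finrank (A ⧸ 𝔪) (Submodule.span (A ⧸ 𝔪) (G : Set Q)) ≤ G.card := by
      simpa using finrank_span_le_card (R := A ⧸ 𝔪) (G : Set Q)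
    rw [hGk] at h1
    rwa [finrank_top] at h1
  refine le_trans (HSLChainBdd.of_finrank (F ∘ C) (fun t => hFmono (hC t)) L ?_) hrank
  intro t ht heq
  exact hL t ht (hFinj _ _ heq)

/-- Chain bound for finitely generated modules killed by a power of a maximal ideal. -/
theorem HSLChainBdd.of_nilpotent {A : Type u_1} [CommRing A] (𝔪 : Ideal A) (hmax : 𝔪.IsMaximal)
    (T𝔪 : Finset A) (hT : Ideal.span (T𝔪 : Set A) = 𝔪) (s : ℕ) :
    ∀ (V : Type u_2) [AddCommGroup V] [Module A V] (G : Finset V),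
      Submodule.span A (G : Set V) = ⊤ → 𝔪 ^ s • (⊤ : Submodule A V) = ⊥ →
      HSLChainBdd (Submodule A V) (G.card * (T𝔪.card + 1) ^ s) := by
  classical
  induction s with
  | zero =>
    intro V _ _ G hG hnil
    have htriv : ∀ W : Submodule A V, W = ⊥ := by
      intro W
      have : (⊤ : Submodule A V) = ⊥ := by simpa [Ideal.one_eq_top] using hnil
      exact le_bot_iff.mp (this ▸ le_top)
    intro C hC L hL
    rcases Nat.eq_zero_or_pos L with h | h
    · omega
    · exact absurd ((htriv _).trans (htriv _).symm) (hL 0 h)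
  | succ s ih =>
    intro V _ _ G hG hnil
    set N : Submodule A V := 𝔪 • ⊤ with hN
    set T' : Finset V := Finset.image₂ (· • ·) T𝔪 G with hT'
    have hT'span : Submodule.span A (T' : Set V) = N := by
      have h1 : (T' : Set V) = ⋃ a ∈ (T𝔪 : Set A), ⋃ b ∈ (G : Set V), {a • b} := by
        ext x
        simp only [hT', Finset.coe_image₂, Set.mem_image2, Set.mem_iUnion, Set.mem_singleton_iff]
        constructor
        · rintro ⟨a, ha, b, hb, rfl⟩; exact ⟨a, ha, b, hb, rfl⟩
        · rintro ⟨a, ha, b, hb, rfl⟩; exact ⟨a, ha, b, hb, rfl⟩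
      rw [h1, ← Set.image2_eq_iUnion, Set.image2_smul, ← Submodule.span_smul_span, hT, hG, hN]
    have hT'mem : ∀ x ∈ T', x ∈ N := fun x hx => hT'span ▸ Submodule.subset_span hx
    set TN : Finset ↥N := T'.attach.map
      ⟨fun x => (⟨x.1, hT'mem x.1 x.2⟩ : ↥N), by
        intro a b h
        exact Subtype.ext (by simpa using h)⟩ with hTN
    have hTNcard : TN.card ≤ T𝔪.card * G.card := by
      rw [hTN, Finset.card_map, Finset.card_attach]
      exact Finset.card_image₂_le _ _ _
    have hTNcoe : (N.subtype '' (TN : Set ↥N)) = (T' : Set V) := by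
      ext x
      simp only [hTN, Finset.coe_map, Set.mem_image, Function.Embedding.coeFn_mk]
      constructor
      · rintro ⟨y, ⟨z, hz, rfl⟩, rfl⟩
        exact z.2
      · intro hx
        exact ⟨⟨x, hT'mem x hx⟩, ⟨⟨⟨x, hx⟩, by simp, rfl⟩, rfl⟩⟩
    have hTNspan : Submodule.span A (TN : Set ↥N) = ⊤ := by
      apply Submodule.map_injective_of_injective N.injective_subtype
      rw [Submodule.map_span, hTNcoe, hT'span, Submodule.map_subtype_top]
    have hNnil : 𝔪 ^ s • (⊤ : Submodule A ↥N) = ⊥ := by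
      apply Submodule.map_injective_of_injective N.injective_subtype
      rw [Submodule.map_smul'', Submodule.map_subtype_top, Submodule.map_bot, hN,
        ← Submodule.smul_assoc, Ideal.smul_eq_mul, ← pow_succ]
      exact hnil
    have hbddN := ih ↥N TN hTNspan hNnil
    set Q := V ⧸ N with hQ
    set GQ : Finset Q := G.image N.mkQ with hGQ
    have hGQspan : Submodule.span A (GQ : Set Q) = ⊤ := by
      rw [hGQ, Finset.coe_image, ← Submodule.map_span, hG, Submodule.map_top,
        Submodule.range_mkQ]
    have hbddQ : HSLChainBdd (Submodule A Q) G.card :=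
      (HSLChainBdd.of_torsion 𝔪 hmax GQ hGQspan).of_le (Finset.card_image_le)
    have hpair := HSLChainBdd.pair (f := fun C : Submodule A V => C.comap N.subtype)
      (g := fun C : Submodule A V => C.map N.mkQ)
      (fun _ _ h => Submodule.comap_mono h) (fun _ _ h => Submodule.map_mono h)
      ?_ hbddN hbddQ
    · refine hpair.of_le ?_
      have hp1 : 1 ≤ (T𝔪.card + 1) ^ s := Nat.one_le_pow _ _ (by omega)
      calc TN.card * (T𝔪.card + 1) ^ s + G.card
          ≤ T𝔪.card * G.card * (T𝔪.card + 1) ^ s + G.card * (T𝔪.card + 1) ^ s := by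
            have := Nat.mul_le_mul_right ((T𝔪.card + 1) ^ s) hTNcard
            nlinarith
        _ = G.card * (T𝔪.card + 1) ^ (s + 1) := by ring
    · intro a b hab hcomap hmap
      have hmap' : a.map N.mkQ = b.map N.mkQ := hmap
      have hcomap' : a.comap N.subtype = b.comap N.subtype := hcomap
      refine le_antisymm hab ?_
      intro x hx
      have h1 : N.mkQ x ∈ b.map N.mkQ := Submodule.mem_map_of_mem hx
      rw [← hmap'] at h1
      obtain ⟨y, hy, hxy⟩ := h1
      have h2 : x - y ∈ N := by
        have h5 : y - x ∈ N := (Submodule.Quotient.eq N).mp (by simpa using hxy)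
        simpa using N.neg_mem h5
      have h3 : (⟨x - y, h2⟩ : ↥N) ∈ b.comap N.subtype := by
        simp only [Submodule.mem_comap, Submodule.coe_subtype]
        exact b.sub_mem hx (hab hy)
      rw [← hcomap'] at h3
      have h4 : x - y ∈ a := h3
      have := a.add_mem hy h4
      simpa using this

/-- Chains in an interval `[E, W]` are bounded by chain bounds for the subquotient. -/
theorem HSLChainBdd.interval {A V' : Type*} [CommRing A] [AddCommGroup V'] [Module A V']
    (E W : Submodule A V') {B : ℕ}
    (hB : HSLChainBdd (Submodule A (↥W ⧸ E.comap W.subtype)) B)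
    (C : ℕ → Submodule A V') (hC : ∀ t, C (t + 1) ≤ C t)
    (hE : ∀ t, E ≤ C t) (hW : ∀ t, C t ≤ W) (L : ℕ)
    (hL : ∀ t < L, C (t + 1) ≠ C t) : L ≤ B := by
  set E' := E.comap W.subtype with hE'
  let ψ : Submodule A V' → Submodule A (↥W ⧸ E') := fun D => (D.comap W.subtype).map E'.mkQ
  have hmono : ∀ {D D' : Submodule A V'}, D ≤ D' → ψ D ≤ ψ D' := fun h =>
    Submodule.map_mono (Submodule.comap_mono h)
  refine hB (fun t => ψ (C t)) (fun t => hmono (hC t)) L ?_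
  intro t ht heq
  refine hL t ht ?_
  refine le_antisymm (hC t) ?_
  intro x hx
  have hxW : x ∈ W := hW t hx
  have h1 : E'.mkQ ⟨x, hxW⟩ ∈ ψ (C t) := Submodule.mem_map_of_mem (by exact hx)
  have heq' : ψ (C (t + 1)) = ψ (C t) := heq
  rw [← heq'] at h1
  obtain ⟨y, hy, hxy⟩ := h1
  have h2 : (⟨x, hxW⟩ : ↥W) - y ∈ E' := by
    have h5 : y - ⟨x, hxW⟩ ∈ E' := (Submodule.Quotient.eq E').mp (by simpa using hxy)
    simpa using E'.neg_mem h5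
  have h3 : x - (y : V') ∈ E := h2
  have h4 : x - (y : V') ∈ C (t + 1) := hE (t + 1) h3
  have h6 : (y : V') ∈ C (t + 1) := hy
  have := (C (t + 1)).add_mem h6 h4
  simpa using this

/-- Polynomial-type growth is eventually beaten by doubly exponential growth. -/
theorem hsl_numeric (a b c : ℕ) : ∃ i : ℕ, a * b ^ (c * (i + 2)) < 2 ^ 2 ^ i := by
  set K := a + b + c + 2 with hK
  set m := K * K + 2 with hm
  refine ⟨4 * m, ?_⟩
  have hKa : a ≤ K := by omega
  have hKb : b ≤ K := by omega
  have hKc : c ≤ K := by omega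
  have hK2 : 2 ≤ K := by omega
  have hm2 : 2 ≤ m := by nlinarith
  have h1 : a * b ^ (c * (4 * m + 2)) ≤ K ^ (c * (4 * m + 2) + 1) := by
    calc a * b ^ (c * (4 * m + 2)) ≤ K * K ^ (c * (4 * m + 2)) :=
          Nat.mul_le_mul hKa (Nat.pow_le_pow_left hKb _)
      _ = K ^ (c * (4 * m + 2) + 1) := by rw [pow_succ, mul_comm]
  have h2 : K ^ (c * (4 * m + 2) + 1) ≤ K ^ (K * (4 * m + 2)) :=
    Nat.pow_le_pow_right (by omega) (by nlinarith)
  have h3 : K ^ (K * (4 * m + 2)) ≤ 2 ^ (K * (K * (4 * m + 2))) := by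
    calc K ^ (K * (4 * m + 2)) ≤ (2 ^ K) ^ (K * (4 * m + 2)) :=
          Nat.pow_le_pow_left (le_of_lt (Nat.lt_two_pow_self (n := K))) _
      _ = 2 ^ (K * (K * (4 * m + 2))) := by rw [← pow_mul]
  have hmm : m * m < 2 ^ (2 * m) := by
    have h4 : m < 2 ^ m := Nat.lt_two_pow_self (n := m)
    calc m * m < 2 ^ m * 2 ^ m := by
          exact Nat.mul_lt_mul_of_lt_of_le h4 (le_of_lt h4) (by positivity)
      _ = 2 ^ (2 * m) := by rw [← pow_add]; ring_nf
  have h5 : K * (K * (4 * m + 2)) < 2 ^ (4 * m) := by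
    have hKm : K * K ≤ m := by omega
    have h7 : K * (K * (4 * m + 2)) ≤ m * (6 * m) := by nlinarith
    have h8 : m * (6 * m) ≤ 8 * (m * m) := by nlinarith
    have h9 : 8 * (m * m) < 8 * 2 ^ (2 * m) := by omega
    have h10 : 8 * 2 ^ (2 * m) ≤ 2 ^ (4 * m) := by
      have he : 8 * 2 ^ (2 * m) = 2 ^ (2 * m + 3) := by rw [pow_add]; ring
      rw [he]
      exact Nat.pow_le_pow_right (by omega) (by omega)
    omega
  have hfinal : 2 ^ (K * (K * (4 * m + 2))) < 2 ^ (2 ^ (4 * m)) :=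
    Nat.pow_lt_pow_right (by omega) h5
  omega

/-- For a `p^{-e}`-linear map `κ` on a finitely generated module `M` over a Noetherian
ring `R` of characteristic `p`: images of submodules are submodules, the iterated
images `κ^[n](M)` form a descending chain which stabilizes, and the stable image `σ`
satisfies `κ(σ) = σ` and contains every submodule on which `κ` is surjective. -/
theorem iterated_images_stabilize {R : Type*} [CommRing R] [IsNoetherianRing R]
    {M : Type*} [AddCommGroup M] [Module R M] [Module.Finite R M]
    (p : ℕ) [Fact p.Prime] [CharP R p] (e : ℕ) (he : 1 ≤ e)
    (κ : M → M)
    (hadd : ∀ x y : M, κ (x + y) = κ x + κ y)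
    (hlin : ∀ (r : R) (m : M), κ (r ^ p ^ e • m) = r • κ m) :
    (∀ N : Submodule R M, ∃ N' : Submodule R M, (N' : Set M) = κ '' (N : Set M)) ∧
    (∀ n : ℕ, κ^[n + 1] '' Set.univ ⊆ κ^[n] '' Set.univ) ∧
    ∃ n₀ : ℕ,
      (∀ n ≥ n₀, κ^[n] '' Set.univ = κ^[n₀] '' Set.univ) ∧
      κ '' (κ^[n₀] '' Set.univ) = κ^[n₀] '' Set.univ ∧
      ∀ N : Submodule R M, κ '' (N : Set M) = (N : Set M) →
        (N : Set M) ⊆ κ^[n₀] '' Set.univ := by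
  classical
  have hp2 : 2 ≤ p := (Fact.out : p.Prime).two_le
  set q : ℕ := p ^ e with hqdef
  have hq2 : 2 ≤ q := le_trans hp2 (Nat.le_self_pow (by omega) p)
  have hκ0 : κ 0 = 0 := by
    have h := hadd 0 0
    rw [add_zero] at h
    exact (left_eq_add.mp h)
  -- the image of a submodule is a submodule
  let img : Submodule R M → Submodule R M := fun N =>
    { carrier := κ '' (N : Set M)
      add_mem' := by
        rintro _ _ ⟨x, hx, rfl⟩ ⟨y, hy, rfl⟩
        exact ⟨x + y, N.add_mem hx hy, hadd x y⟩
      zero_mem' := ⟨0, N.zero_mem, hκ0⟩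
      smul_mem' := by
        rintro r _ ⟨x, hx, rfl⟩
        exact ⟨r ^ q • x, N.smul_mem _ hx, hlin r x⟩ }
  have img_coe : ∀ N : Submodule R M, (img N : Set M) = κ '' (N : Set M) := fun _ => rfl
  have img_mono : Monotone img := by
    intro N N' h x hx
    obtain ⟨y, hy, rfl⟩ := hx
    exact ⟨y, h hy, rfl⟩
  let Nn : ℕ → Submodule R M := fun n => img^[n] ⊤
  have hNsucc : ∀ n, Nn (n + 1) = img (Nn n) := fun n => Function.iterate_succ_apply' img n ⊤
  have hNcoe : ∀ n, (Nn n : Set M) = κ^[n] '' Set.univ := by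
    intro n
    induction n with
    | zero => simp [Nn]
    | succ n ih =>
      rw [hNsucc n, img_coe, ih, Function.iterate_succ', Set.image_comp]
  have hdesc : ∀ n, Nn (n + 1) ≤ Nn n := by
    intro n
    induction n with
    | zero => exact le_top
    | succ n ih =>
      have h := img_mono ih
      rw [← hNsucc (n + 1), ← hNsucc n] at h
      exact h
  have hNant : Antitone Nn := antitone_nat_of_succ_le hdesc
  -- the ascending chain of annihilator ideals
  let I : ℕ → Ideal R := fun n =>
    { carrier := {r : R | ∀ x ∈ Nn n, r • x ∈ Nn (n + 1)}
      add_mem' := by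
        intro a b ha hb x hx
        rw [add_smul]
        exact (Nn (n + 1)).add_mem (ha x hx) (hb x hx)
      zero_mem' := by
        intro x hx
        rw [zero_smul]
        exact (Nn (n + 1)).zero_mem
      smul_mem' := by
        intro c r hr x hx
        rw [smul_eq_mul, mul_smul]
        exact (Nn (n + 1)).smul_mem c (hr x hx) }
  have hImono : ∀ n, I n ≤ I (n + 1) := by
    intro n r hr x hx
    have hx' : x ∈ κ '' (Nn n : Set M) := by rw [hNsucc n] at hx; exact hx
    obtain ⟨y, hy, rfl⟩ := hx'
    have h1 : r • y ∈ Nn (n + 1) := hr y hy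
    have h2 : r ^ q • y ∈ Nn (n + 1) := by
      have he1 : r ^ q = r ^ (q - 1) * r := by
        rw [← pow_succ]
        congr 1
        omega
      rw [he1, mul_smul]
      exact (Nn (n + 1)).smul_mem _ h1
    show r • κ y ∈ Nn (n + 1 + 1)
    rw [← hlin r y, hNsucc (n + 1)]
    exact ⟨r ^ q • y, h2, rfl⟩
  obtain ⟨n₁, hn₁⟩ := monotone_stabilizes_iff_noetherian.mpr
    (inferInstance : IsNoetherian R R) ⟨I, monotone_nat_of_le_succ hImono⟩
  replace hn₁ : ∀ m, n₁ ≤ m → I n₁ = I m := hn₁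
  -- main stabilization
  have main : ∃ n₀ : ℕ, ∀ n, n₀ ≤ n → Nn n = Nn n₀ := by
    by_cases hJ : I n₁ = ⊤
    · refine ⟨n₁, ?_⟩
      intro n hn
      induction n, hn using Nat.le_induction with
      | base => rfl
      | succ n hn ih =>
        have hIn : I n = ⊤ := by rw [← hn₁ n hn]; exact hJ
        have hle : Nn n ≤ Nn (n + 1) := by
          intro x hx
          have h1 : (1 : R) ∈ I n := hIn ▸ Submodule.mem_top
          have h2 : (1 : R) • x ∈ Nn (n + 1) := h1 x hx
          simpa using h2
        rw [← ih]
        exact le_antisymm (hdesc n) hle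
    · exfalso
      -- the chain is strictly decreasing from n₁ on
      have hstrict : ∀ n, n₁ ≤ n → Nn (n + 1) ≠ Nn n := by
        intro n hn heq
        apply hJ
        rw [hn₁ n hn, Ideal.eq_top_iff_one]
        show ∀ x ∈ Nn n, (1 : R) • x ∈ Nn (n + 1)
        intro x hx
        rw [one_smul, heq]
        exact hx
      -- the bootstrap lemma
      have hboot : ∀ j : ℕ, ∀ r ∈ I n₁, ∀ n : ℕ, n₁ + j ≤ n →
          ∀ x ∈ Nn n, r • x ∈ Nn (n + q ^ j) := by
        intro j
        induction j with
        | zero =>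
          intro r hr n hn x hx
          have hrn : r ∈ I n := by rw [← hn₁ n (by omega)]; exact hr
          have h2 := hrn x hx
          simpa using h2
        | succ j ih =>
          intro r hr n hn x hx
          obtain ⟨n', rfl⟩ : ∃ n', n = n' + 1 := ⟨n - 1, by omega⟩
          have hx' : x ∈ κ '' (Nn n' : Set M) := by rw [hNsucc n'] at hx; exact hx
          obtain ⟨y, hy, rfl⟩ := hx'
          have hk : ∀ k : ℕ, r ^ k • y ∈ Nn (n' + k * q ^ j) := by
            intro k
            induction k with
            | zero => simpa using hy
            | succ k ihk =>
              have h1 := ih r hr (n' + k * q ^ j) (by omega) _ ihk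
              have he1 : r ^ (k + 1) • y = r • (r ^ k • y) := by
                rw [← mul_smul, ← pow_succ']
              rw [he1, show n' + (k + 1) * q ^ j = n' + k * q ^ j + q ^ j by ring]
              exact h1
          have h2 := hk q
          have he3 : n' + 1 + q ^ (j + 1) = (n' + q * q ^ j) + 1 := by
            rw [pow_succ]
            ring
          rw [← hlin r y, he3, hNsucc]
          exact ⟨r ^ q • y, h2, rfl⟩
      -- the tower sequence
      let d : ℕ → ℕ := fun i => Nat.rec 0 (fun _ di => di + q ^ di) i
      have hds : ∀ i, d (i + 1) = d i + q ^ d i := fun _ => rfl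
      have hdge : ∀ i, i ≤ d i := by
        intro i
        induction i with
        | zero => omega
        | succ i ih =>
          have h1 : 1 ≤ q ^ d i := Nat.one_le_pow _ _ (by omega)
          rw [hds]
          omega
      have hd2 : ∀ i, 2 ^ 2 ^ i ≤ d (i + 2) := by
        intro i
        have h1 : 2 ^ i ≤ d (i + 1) := by
          have h2 : 2 ^ i ≤ 2 ^ d i := Nat.pow_le_pow_right (by omega) (hdge i)
          have h3 : 2 ^ d i ≤ q ^ d i := Nat.pow_le_pow_left hq2 _
          rw [hds]
          omega
        have h3 : 2 ^ 2 ^ i ≤ 2 ^ d (i + 1) := Nat.pow_le_pow_right (by omega) h1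
        have h4 : 2 ^ d (i + 1) ≤ q ^ d (i + 1) := Nat.pow_le_pow_left hq2 _
        have h5 : d (i + 2) = d (i + 1) + q ^ d (i + 1) := hds (i + 1)
        omega
      -- ideal powers contract the chain fast
      have hpow : ∀ i, (I n₁) ^ i • Nn n₁ ≤ Nn (n₁ + d i) := by
        intro i
        induction i with
        | zero =>
          rw [pow_zero, Ideal.one_eq_top, Submodule.top_smul]
          exact le_rfl
        | succ i ih =>
          have h1 : (I n₁) ^ (i + 1) • Nn n₁ = I n₁ • ((I n₁) ^ i • Nn n₁) := by
            rw [pow_succ', ← Ideal.smul_eq_mul, Submodule.smul_assoc]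
          rw [h1]
          refine le_trans (Submodule.smul_mono le_rfl ih) ?_
          rw [show n₁ + d (i + 1) = (n₁ + d i) + q ^ d i by rw [hds]; ring]
          refine Submodule.smul_le.mpr ?_
          intro r hr x hx
          exact hboot (d i) r hr (n₁ + d i) le_rfl x hx
      -- a minimal prime over the stable annihilator
      obtain ⟨P₀, hP₀max, hJP₀⟩ := Ideal.exists_le_maximal (I n₁) hJ
      haveI := hP₀max.isPrime
      obtain ⟨P, hPmin, hPP₀⟩ := Ideal.exists_minimalPrimes_le hJP₀
      have hPprime : P.IsPrime := hPmin.1.1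
      have hJP : I n₁ ≤ P := hPmin.1.2
      haveI := hPprime
      -- localization
      let fl : M →ₗ[R] LocalizedModule P.primeCompl M :=
        LocalizedModule.mkLinearMap P.primeCompl M
      let D : Submodule R M → Submodule (Localization P.primeCompl)
          (LocalizedModule P.primeCompl M) := fun C =>
        C.localized' (Localization P.primeCompl) P.primeCompl fl
      have hDmono : ∀ {C C' : Submodule R M}, C ≤ C' → D C ≤ D C' := by
        intro C C' h x hx
        rw [Submodule.mem_localized'] at hx ⊢
        obtain ⟨m, hm, s, rfl⟩ := hx
        exact ⟨m, h hm, s, rfl⟩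
      -- localized chain is still strictly decreasing
      have hDne : ∀ n, n₁ ≤ n → D (Nn (n + 1)) ≠ D (Nn n) := by
        intro n hn heq
        obtain ⟨X, hX⟩ := IsNoetherian.noetherian (Nn n)
        have hstep : ∀ x ∈ X, ∃ u : P.primeCompl, (u : R) • x ∈ Nn (n + 1) := by
          intro x hxX
          have hxN : x ∈ Nn n := hX ▸ Submodule.subset_span hxX
          have h1 : fl x ∈ D (Nn n) := by
            rw [Submodule.mem_localized']
            exact ⟨x, hxN, 1, IsLocalizedModule.mk'_one P.primeCompl fl x⟩
          rw [← heq, Submodule.mem_localized'] at h1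
          obtain ⟨m, hm, s, hms⟩ := h1
          have h2 : IsLocalizedModule.mk' fl m s = IsLocalizedModule.mk' fl x (1 : P.primeCompl) := by
            rw [hms, IsLocalizedModule.mk'_one]
          rw [IsLocalizedModule.mk'_eq_mk'_iff] at h2
          obtain ⟨c, hc⟩ := h2
          refine ⟨c * s, ?_⟩
          have h3 : ((c * s : P.primeCompl) : R) • x = (c : R) • m := by
            have hc' : (c : R) • ((s : R) • x) = (c : R) • ((1 : R) • m) := by
              simpa [Submonoid.smul_def] using hc
            rw [Submonoid.coe_mul, mul_smul]
            simpa using hc'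
          rw [h3]
          exact (Nn (n + 1)).smul_mem _ hm
        choose u hu using hstep
        set s₀ : R := ∏ x ∈ X.attach, (u x.1 x.2 : R) with hs₀
        have hs₀S : s₀ ∈ P.primeCompl := by
          rw [hs₀]
          exact prod_mem (fun i _ => (u i.1 i.2).2)
        have hs₀I : s₀ ∈ I n := by
          show ∀ y ∈ Nn n, s₀ • y ∈ Nn (n + 1)
          intro y hy
          rw [← hX] at hy
          refine Submodule.span_induction ?_ ?_ ?_ ?_ hy
          · intro z hz
            have hprod := Finset.mul_prod_erase X.attach
              (fun x => (u x.1 x.2 : R)) (Finset.mem_attach X ⟨z, hz⟩)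
            have hrw : s₀ = (∏ x ∈ X.attach.erase ⟨z, hz⟩, (u x.1 x.2 : R)) *
                (u z hz : R) := by
              rw [hs₀, ← hprod]
              ring
            rw [hrw, mul_smul]
            exact (Nn (n + 1)).smul_mem _ (hu z hz)
          · rw [smul_zero]
            exact (Nn (n + 1)).zero_mem
          · intro y z _ _ hy' hz'
            rw [smul_add]
            exact (Nn (n + 1)).add_mem hy' hz'
          · intro a y _ hy'
            rw [smul_comm]
            exact (Nn (n + 1)).smul_mem a hy'
        have hs₀P : s₀ ∈ P := hJP (by rw [hn₁ n hn]; exact hs₀I)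
        exact hs₀S hs₀P
      -- the Noetherian local ring downstairs
      haveI hANoeth : IsNoetherianRing (Localization P.primeCompl) :=
        IsLocalization.isNoetherianRing P.primeCompl _ inferInstance
      set 𝔪 := IsLocalRing.maximalIdeal (Localization P.primeCompl) with h𝔪
      have h𝔪max : 𝔪.IsMaximal := IsLocalRing.maximalIdeal.isMaximal _
      set Jm := (I n₁).map (algebraMap R (Localization P.primeCompl)) with hJm
      have hrad : 𝔪 ≤ Jm.radical := by
        rw [Ideal.radical_eq_sInf]
        refine le_sInf ?_
        rintro Q ⟨hJQ, hQprime⟩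
        haveI := hQprime
        have hcom := (IsLocalization.isPrime_iff_isPrime_disjoint P.primeCompl
          (Localization P.primeCompl) Q).mp hQprime
        set qc := Q.comap (algebraMap R (Localization P.primeCompl)) with hqc
        have hqP : qc ≤ P := by
          intro r hr
          by_contra hrP
          exact Set.disjoint_left.mp hcom.2 (show r ∈ P.primeCompl from hrP) hr
        have hJqc : I n₁ ≤ qc := by
          intro r hr
          show algebraMap R (Localization P.primeCompl) r ∈ Q
          exact hJQ (Ideal.mem_map_of_mem _ hr)
        have hPqc : P ≤ qc := hPmin.2 ⟨hcom.1, hJqc⟩ hqP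
        have hPeq : qc = P := le_antisymm hqP hPqc
        calc 𝔪 = P.map (algebraMap R (Localization P.primeCompl)) :=
              (Localization.AtPrime.map_eq_maximalIdeal).symm
          _ = qc.map (algebraMap R (Localization P.primeCompl)) := by rw [hPeq]
          _ ≤ Q := Ideal.map_comap_le
      obtain ⟨t₀, ht₀⟩ := Ideal.exists_pow_le_of_le_radical_of_fg hrad
        (IsNoetherian.noetherian 𝔪)
      -- mapped ideal powers act compatibly with localization
      have hmapsmul : ∀ (I₀ : Ideal R) (C : Submodule R M),
          (I₀.map (algebraMap R (Localization P.primeCompl))) • D C ≤ D (I₀ • C) := by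
        intro I₀ C
        refine Submodule.smul_le.mpr ?_
        intro a ha y hy
        have haspan : a ∈ Submodule.span (Localization P.primeCompl)
            ((algebraMap R (Localization P.primeCompl)) '' I₀) := ha
        refine Submodule.span_induction ?_ ?_ ?_ ?_ haspan
        · rintro _ ⟨r, hr, rfl⟩
          rw [Submodule.mem_localized'] at hy
          obtain ⟨m, hm, s, rfl⟩ := hy
          rw [algebraMap_smul, ← IsLocalizedModule.mk'_smul, Submodule.mem_localized']
          exact ⟨r • m, Submodule.smul_mem_smul hr hm, s, rfl⟩
        · rw [zero_smul]
          exact Submodule.zero_mem _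
        · intro a' b' _ _ ha' hb'
          rw [add_smul]
          exact Submodule.add_mem _ ha' hb'
        · intro a' b' _ hb'
          rw [smul_eq_mul, mul_smul]
          exact Submodule.smul_mem _ a' hb'
      -- generators
      obtain ⟨X₁, hX₁⟩ := IsNoetherian.noetherian (Nn n₁)
      obtain ⟨T𝔪, hT𝔪⟩ := IsNoetherian.noetherian 𝔪
      -- the per-i chain bound
      have hbound : ∀ i : ℕ, d i ≤ X₁.card * (T𝔪.card + 1) ^ (t₀ * i) := by
        intro i
        set s := t₀ * i with hs
        set W := D (Nn n₁) with hWdef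
        set E := 𝔪 ^ s • W with hEdef
        have hEW : E ≤ W := Submodule.smul_le_right
        have hEbot : E ≤ D (Nn (n₁ + d i)) := by
          have e1 : 𝔪 ^ s ≤ Jm ^ i := by
            rw [hs, pow_mul]
            exact Ideal.pow_right_mono ht₀ i
          have e2 : Jm ^ i = ((I n₁) ^ i).map (algebraMap R (Localization P.primeCompl)) := by
            rw [hJm, Ideal.map_pow]
          calc E ≤ Jm ^ i • W := Submodule.smul_mono e1 le_rfl
            _ = ((I n₁) ^ i).map (algebraMap R (Localization P.primeCompl)) • W := by rw [e2]
            _ ≤ D ((I n₁) ^ i • Nn n₁) := hmapsmul _ _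
            _ ≤ D (Nn (n₁ + d i)) := hDmono (hpow i)
        have hWspan : W = Submodule.span (Localization P.primeCompl) (fl '' ↑X₁) := by
          rw [hWdef, ← hX₁]
          exact Submodule.localized'_span _ _ _ _
        set GW : Finset (LocalizedModule P.primeCompl M) := X₁.image fl with hGW
        have hGWcoe : (GW : Set (LocalizedModule P.primeCompl M)) = fl '' ↑X₁ := by
          rw [hGW]
          exact Finset.coe_image
        have hGWsub : ∀ z ∈ GW, z ∈ W := by
          intro z hz
          rw [hWspan]
          apply Submodule.subset_span
          rw [← hGWcoe]
          exact hz
        set XW : Finset ↥W := GW.attach.map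
          ⟨fun z => (⟨z.1, hGWsub z.1 z.2⟩ : ↥W), by
            intro a b h
            exact Subtype.ext (by simpa using h)⟩ with hXW
        have hXWcard : XW.card ≤ X₁.card := by
          rw [hXW, Finset.card_map, Finset.card_attach, hGW]
          exact Finset.card_image_le
        have hXWcoe : (W.subtype '' (XW : Set ↥W)) = (GW : Set (LocalizedModule P.primeCompl M)) := by
          ext z
          simp only [hXW, Finset.coe_map, Set.mem_image, Function.Embedding.coeFn_mk]
          constructor
          · rintro ⟨y, ⟨w, hw, rfl⟩, rfl⟩
            exact w.2
          · intro hz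
            exact ⟨⟨z, hGWsub z hz⟩, ⟨⟨⟨z, hz⟩, by simp, rfl⟩, rfl⟩⟩
        have hXWspan : Submodule.span (Localization P.primeCompl) (XW : Set ↥W) = ⊤ := by
          apply Submodule.map_injective_of_injective W.injective_subtype
          rw [Submodule.map_span, hXWcoe, hGWcoe, ← hWspan, Submodule.map_subtype_top]
        set E' := E.comap W.subtype with hE'def
        set GQ : Finset (↥W ⧸ E') := XW.image E'.mkQ with hGQdef
        have hGQspan : Submodule.span (Localization P.primeCompl) (GQ : Set (↥W ⧸ E')) = ⊤ := by
          rw [hGQdef, Finset.coe_image, ← Submodule.map_span, hXWspan, Submodule.map_top,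
            Submodule.range_mkQ]
        have hGQcard : GQ.card ≤ X₁.card := le_trans Finset.card_image_le hXWcard
        have hnilQ : 𝔪 ^ s • (⊤ : Submodule (Localization P.primeCompl) (↥W ⧸ E')) = ⊥ := by
          have h1 : 𝔪 ^ s • (⊤ : Submodule (Localization P.primeCompl) ↥W) ≤ E' := by
            rw [hE'def, ← Submodule.map_le_iff_le_comap, Submodule.map_smul'',
              Submodule.map_subtype_top]
          have h2 : 𝔪 ^ s • (⊤ : Submodule (Localization P.primeCompl) (↥W ⧸ E')) =
              Submodule.map E'.mkQ (𝔪 ^ s • (⊤ : Submodule (Localization P.primeCompl) ↥W)) := by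
            rw [Submodule.map_smul'', Submodule.map_top, Submodule.range_mkQ]
          rw [h2, ← le_bot_iff]
          refine le_trans (Submodule.map_mono h1) ?_
          rintro z ⟨w, hw, rfl⟩
          simpa using (Submodule.Quotient.mk_eq_zero E').mpr hw
        have hB := HSLChainBdd.of_nilpotent 𝔪 h𝔪max T𝔪 hT𝔪 s (↥W ⧸ E') GQ hGQspan hnilQ
        have hchain := HSLChainBdd.interval E W hB
          (fun j => D (Nn (n₁ + min j (d i))))
          (fun j => hDmono (hNant (by omega)))
          (fun j => le_trans hEbot (hDmono (hNant (by omega))))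
          (fun j => hDmono (hNant (by omega)))
          (d i) ?_
        · exact le_trans hchain (Nat.mul_le_mul_right _ hGQcard)
        · intro t ht heq
          have heq' : D (Nn (n₁ + min (t + 1) (d i))) = D (Nn (n₁ + min t (d i))) := heq
          have h1 : min (t + 1) (d i) = t + 1 := by omega
          have h2 : min t (d i) = t := by omega
          rw [h1, h2] at heq'
          exact hDne (n₁ + t) (by omega) heq'
      obtain ⟨i, hi⟩ := hsl_numeric X₁.card (T𝔪.card + 1) t₀
      have h1 := hbound (i + 2)
      have h2 := hd2 i
      omega
  -- final assembly
  obtain ⟨n₀, hn₀⟩ := main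
  refine ⟨fun N => ⟨img N, img_coe N⟩, ?_, n₀, ?_, ?_, ?_⟩
  · intro n
    rw [← hNcoe n, ← hNcoe (n + 1)]
    exact hdesc n
  · intro n hn
    rw [← hNcoe n, ← hNcoe n₀, hn₀ n hn]
  · have h1 : κ '' (κ^[n₀] '' Set.univ) = κ^[n₀ + 1] '' Set.univ := by
      rw [Function.iterate_succ', Set.image_comp]
    rw [h1, ← hNcoe, ← hNcoe, hn₀ (n₀ + 1) (by omega)]
  · intro N hN
    have hiter : ∀ n, κ^[n] '' (N : Set M) = (N : Set M) := by
      intro n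
      induction n with
      | zero => simp
      | succ n ih => rw [Function.iterate_succ', Set.image_comp, ih, hN]
    intro x hx
    rw [← hiter n₀] at hx
    exact Set.image_mono (Set.subset_univ _) hx
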